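/- Let n ≥ 1 be an integer. The set of real zeros of the derivative V_n' is finite and has exactly 4n − 1 elements. This set contains 0 and the points ±(k − 1/2) for k = 1, …, n, and for each k = 1, …, n−1 it contains exactly one point in the open interval (k − 1/2, k + 1/2) and exactly one point in (−k − 1/2, −k + 1/2). -/

import Mathlib

open Finset

/-- The φ^{4n} potential `V_n(x) = ∏_{k=1}^n (x² − (k−1/2)²)²`. -/
noncomputable def Vn (n : ℕ) : ℝ → ℝ :=
  fun x => ∏ k ∈ Finset.Icc 1 n, (x ^ 2 - ((k : ℝ) - 1 / 2) ^ 2) ^ 2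

namespace Stmt17Aux
open Polynomial

noncomputable def Pn (n : ℕ) : Polynomial ℝ :=
  ∏ k ∈ Finset.Icc 1 n, (X ^ 2 - C (((k : ℝ) - 1 / 2) ^ 2)) ^ 2

lemma Vn_eq (n : ℕ) (x : ℝ) : Vn n x = (Pn n).eval x := by
  simp only [Vn, Pn, eval_prod, eval_pow, eval_sub, eval_X, eval_C]

lemma Vn_fun (n : ℕ) : Vn n = fun x => (Pn n).eval x := funext (Vn_eq n)

lemma deriv_Vn (n : ℕ) (x : ℝ) : deriv (Vn n) x = ((Pn n).derivative).eval x := by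
  rw [Vn_fun]; exact Polynomial.deriv _

lemma Vn_nonneg (n : ℕ) (x : ℝ) : 0 ≤ Vn n x :=
  Finset.prod_nonneg fun _ _ => sq_nonneg _

lemma Vn_even (n : ℕ) (x : ℝ) : Vn n (-x) = Vn n x := by
  simp [Vn, neg_sq]

lemma deriv_Vn_odd (n : ℕ) (x : ℝ) : deriv (Vn n) (-x) = - deriv (Vn n) x := by
  have h : (fun y => Vn n (-y)) = Vn n := funext fun y => Vn_even n y
  have := deriv_comp_neg (f := Vn n) (x := x)
  rw [h] at this
  rw [this, neg_neg]

lemma deriv_zero_of_root (n : ℕ) {y : ℝ} (h : Vn n y = 0) : deriv (Vn n) y = 0 := by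
  apply IsLocalMin.deriv_eq_zero
  exact Filter.Eventually.of_forall fun x => by rw [h]; exact Vn_nonneg n x

lemma Vn_root (n : ℕ) {k : ℕ} (hk : k ∈ Finset.Icc 1 n) : Vn n ((k:ℝ) - 1/2) = 0 :=
  Finset.prod_eq_zero hk (by ring)

lemma factor_natDegree (b : ℝ) : ((X ^ 2 - C b) ^ 2 : Polynomial ℝ).natDegree = 4 := by
  rw [natDegree_pow, natDegree_X_pow_sub_C]

lemma factor_ne_zero (b : ℝ) : ((X ^ 2 - C b) ^ 2 : Polynomial ℝ) ≠ 0 := by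
  intro h
  have := factor_natDegree b
  rw [h, natDegree_zero] at this
  exact (by norm_num : (0:ℕ) ≠ 4) this

lemma Pn_natDegree (n : ℕ) : (Pn n).natDegree = 4 * n := by
  rw [Pn, natDegree_prod _ _ (fun k _ => factor_ne_zero _)]
  simp only [factor_natDegree, Finset.sum_const, smul_eq_mul, Nat.card_Icc]
  omega

lemma Pn_deriv_natDegree (n : ℕ) (hn : 1 ≤ n) :
    ((Pn n).derivative).natDegree = 4 * n - 1 := by
  have h : 0 < (Pn n).natDegree := by rw [Pn_natDegree]; omega
  have := degree_derivative_eq (Pn n) h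
  rw [Pn_natDegree] at this
  exact natDegree_eq_of_degree_eq_some this

lemma Pn_deriv_ne_zero (n : ℕ) (hn : 1 ≤ n) : (Pn n).derivative ≠ 0 := by
  intro h
  have := Pn_deriv_natDegree n hn
  rw [h, natDegree_zero] at this
  omega

lemma rolle_exists (n : ℕ) (hn : 1 ≤ n) :
    ∃ c : ℕ → ℝ, ∀ k, 1 ≤ k → k ≤ n - 1 →
      c k ∈ Set.Ioo ((k:ℝ) - 1/2) ((k:ℝ) + 1/2) ∧ deriv (Vn n) (c k) = 0 := by
  have H : ∀ k : ℕ, ∃ x : ℝ, 1 ≤ k → k ≤ n - 1 →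
      x ∈ Set.Ioo ((k:ℝ) - 1/2) ((k:ℝ) + 1/2) ∧ deriv (Vn n) x = 0 := by
    intro k
    by_cases hk : 1 ≤ k ∧ k ≤ n - 1
    · obtain ⟨hk1, hk2⟩ := hk
      have hab : (k:ℝ) - 1/2 < (k:ℝ) + 1/2 := by linarith
      have hcont : ContinuousOn (Vn n) (Set.Icc ((k:ℝ) - 1/2) ((k:ℝ) + 1/2)) := by
        rw [Vn_fun]; exact (Pn n).continuous_aeval.continuousOn
      have hmem1 : k ∈ Finset.Icc 1 n := by simp; omega
      have hmem2 : k + 1 ∈ Finset.Icc 1 n := by simp; omega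
      have hend : Vn n ((k:ℝ) - 1/2) = Vn n ((k:ℝ) + 1/2) := by
        rw [Vn_root n hmem1]
        have := Vn_root n hmem2
        push_cast at this
        rw [show ((k:ℝ) + 1/2) = (k:ℝ) + 1 - 1/2 by ring, ← this]
      obtain ⟨x, hx, hdx⟩ := exists_deriv_eq_zero hab hcont hend
      exact ⟨x, fun _ _ => ⟨hx, hdx⟩⟩
    · exact ⟨0, fun h1 h2 => absurd ⟨h1, h2⟩ hk⟩
  choose c hc using H
  exact ⟨c, fun k h1 h2 => hc k h1 h2⟩

end Stmt17Aux

open Stmt17Aux Polynomial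

theorem stmt17 (n : ℕ) (hn : 1 ≤ n) :
    {x : ℝ | deriv (Vn n) x = 0}.Finite ∧
    {x : ℝ | deriv (Vn n) x = 0}.ncard = 4 * n - 1 ∧
    deriv (Vn n) 0 = 0 ∧
    (∀ k ∈ Finset.Icc 1 n,
      deriv (Vn n) ((k : ℝ) - 1 / 2) = 0 ∧ deriv (Vn n) (-((k : ℝ) - 1 / 2)) = 0) ∧
    (∀ k : ℕ, 1 ≤ k → k ≤ n - 1 →
      (∃! x : ℝ, x ∈ Set.Ioo ((k : ℝ) - 1 / 2) ((k : ℝ) + 1 / 2) ∧ deriv (Vn n) x = 0) ∧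
      (∃! x : ℝ, x ∈ Set.Ioo (-(k : ℝ) - 1 / 2) (-(k : ℝ) + 1 / 2) ∧ deriv (Vn n) x = 0)) := by
  obtain ⟨c, hc⟩ := rolle_exists n hn
  -- basic derivative facts
  have hd0 : deriv (Vn n) 0 = 0 := by
    have := deriv_Vn_odd n 0
    rw [neg_zero] at this
    linarith
  have hda : ∀ k ∈ Finset.Icc 1 n,
      deriv (Vn n) ((k : ℝ) - 1 / 2) = 0 ∧ deriv (Vn n) (-((k : ℝ) - 1 / 2)) = 0 := by
    intro k hk
    have h1 : deriv (Vn n) ((k : ℝ) - 1 / 2) = 0 := deriv_zero_of_root n (Vn_root n hk)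
    exact ⟨h1, by rw [deriv_Vn_odd, h1, neg_zero]⟩
  -- the root finset T
  have hq0 : (Pn n).derivative ≠ 0 := Pn_deriv_ne_zero n hn
  set T : Finset ℝ := ((Pn n).derivative).roots.toFinset with hT
  have hZ : {x : ℝ | deriv (Vn n) x = 0} = ↑T := by
    ext x
    simp only [Set.mem_setOf_eq, hT, Finset.coe_sort_coe, Finset.mem_coe,
      Multiset.mem_toFinset, mem_roots, hq0, ne_eq, not_false_eq_true, true_and,
      IsRoot.def, deriv_Vn]
  have hTcard : T.card ≤ 4 * n - 1 := by
    calc T.card ≤ Multiset.card ((Pn n).derivative).roots := Multiset.toFinset_card_le _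
    _ ≤ ((Pn n).derivative).natDegree := card_roots' _
    _ = 4 * n - 1 := Pn_deriv_natDegree n hn
  -- the explicit finset S of roots
  set Apos : Finset ℝ := (Finset.Icc 1 n).image (fun k : ℕ => (k:ℝ) - 1/2) with hApos
  set Cpos : Finset ℝ := (Finset.Icc 1 (n-1)).image c with hCpos
  set S : Finset ℝ := (Apos ∪ Cpos) ∪ (Apos ∪ Cpos).image (fun x => -x) ∪ {0} with hS
  have hApos_half : ∀ x ∈ Apos, (1:ℝ)/2 ≤ x := by
    intro x hx
    obtain ⟨k, hk, rfl⟩ := Finset.mem_image.1 hx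
    rw [Finset.mem_Icc] at hk
    have : (1:ℝ) ≤ k := by exact_mod_cast hk.1
    linarith
  have hCpos_half : ∀ x ∈ Cpos, (1:ℝ)/2 < x := by
    intro x hx
    obtain ⟨k, hk, rfl⟩ := Finset.mem_image.1 hx
    rw [Finset.mem_Icc] at hk
    have h1 := (hc k hk.1 hk.2).1.1
    have : (1:ℝ) ≤ k := by exact_mod_cast hk.1
    linarith
  have hpos_half : ∀ x ∈ Apos ∪ Cpos, (1:ℝ)/2 ≤ x := by
    intro x hx
    rcases Finset.mem_union.1 hx with h | h
    · exact hApos_half x h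
    · exact le_of_lt (hCpos_half x h)
  -- cardinalities
  have hAcard : Apos.card = n := by
    rw [hApos, Finset.card_image_of_injective _ (fun a b h => by
      field_simp at h; exact_mod_cast (by linarith : (a:ℝ) = b)), Nat.card_Icc]
    omega
  have hCcard : Cpos.card = n - 1 := by
    have hinj : Set.InjOn c (Finset.Icc 1 (n-1) : Finset ℕ) := by
      intro j hj k hk hjk
      rw [Finset.mem_coe, Finset.mem_Icc] at hj hk
      by_contra hne
      have hcj := (hc j hj.1 hj.2).1
      have hck := (hc k hk.1 hk.2).1
      rcases Nat.lt_or_ge j k with h | h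
      · have : (j:ℝ) + 1 ≤ k := by exact_mod_cast h
        have := hcj.2; have := hck.1; simp only [Set.mem_Ioo] at *
        linarith
      · have hlt : k < j := by omega
        have : (k:ℝ) + 1 ≤ j := by exact_mod_cast hlt
        have := hcj.1; have := hck.2; simp only [Set.mem_Ioo] at *
        linarith
    rw [hCpos, Finset.card_image_of_injOn hinj, Nat.card_Icc]
    omega
  have hACdisj : Disjoint Apos Cpos := by
    rw [Finset.disjoint_left]
    intro x hxA hxC
    obtain ⟨j, hj, rfl⟩ := Finset.mem_image.1 hxA
    obtain ⟨k, hk, hjk⟩ := Finset.mem_image.1 hxC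
    rw [Finset.mem_Icc] at hj hk
    have h1 := (hc k hk.1 hk.2).1
    rw [hjk] at h1
    obtain ⟨hl, hr⟩ := h1
    have hklt : (k:ℝ) < j := by linarith
    have hjlt : (j:ℝ) < k + 1 := by linarith
    have : k < j := by exact_mod_cast hklt
    have : j < k + 1 := by exact_mod_cast hjlt
    omega
  have hACcard : (Apos ∪ Cpos).card = 2 * n - 1 := by
    rw [Finset.card_union_of_disjoint hACdisj, hAcard, hCcard]; omega
  have hNegcard : ((Apos ∪ Cpos).image (fun x : ℝ => -x)).card = 2 * n - 1 := by
    rw [Finset.card_image_of_injective _ neg_injective, hACcard]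
  have hPNdisj : Disjoint (Apos ∪ Cpos) ((Apos ∪ Cpos).image (fun x : ℝ => -x)) := by
    rw [Finset.disjoint_left]
    intro x hx hx'
    obtain ⟨y, hy, rfl⟩ := Finset.mem_image.1 hx'
    have h1 := hpos_half _ hx
    have h2 := hpos_half _ hy
    linarith
  have h0notin : (0:ℝ) ∉ (Apos ∪ Cpos) ∪ (Apos ∪ Cpos).image (fun x : ℝ => -x) := by
    intro h
    rcases Finset.mem_union.1 h with h | h
    · have := hpos_half _ h; linarith
    · obtain ⟨y, hy, hy0⟩ := Finset.mem_image.1 h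
      have := hpos_half _ hy; linarith
  have hScard : S.card = 4 * n - 1 := by
    rw [hS]
    rw [Finset.union_comm _ {0}, ← Finset.insert_eq,
      Finset.card_insert_of_notMem h0notin,
      Finset.card_union_of_disjoint hPNdisj, hACcard, hNegcard]
    omega
  -- every element of S is a critical point
  have hposroot : ∀ x ∈ Apos ∪ Cpos, deriv (Vn n) x = 0 := by
    intro x hx
    rcases Finset.mem_union.1 hx with h | h
    · obtain ⟨k, hk, rfl⟩ := Finset.mem_image.1 h
      exact (hda k hk).1
    · obtain ⟨k, hk, rfl⟩ := Finset.mem_image.1 h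
      rw [Finset.mem_Icc] at hk
      exact (hc k hk.1 hk.2).2
  have hSsub : S ⊆ T := by
    intro x hx
    have hdx : deriv (Vn n) x = 0 := by
      rw [hS] at hx
      rcases Finset.mem_union.1 hx with h | h
      · rcases Finset.mem_union.1 h with h | h
        · exact hposroot x h
        · obtain ⟨y, hy, rfl⟩ := Finset.mem_image.1 h
          rw [deriv_Vn_odd, hposroot y hy, neg_zero]
      · rw [Finset.mem_singleton.1 h]; exact hd0
    have : x ∈ {x : ℝ | deriv (Vn n) x = 0} := hdx
    rwa [hZ, Finset.mem_coe] at this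
  have hST : S = T := Finset.eq_of_subset_of_card_le hSsub (by omega)
  have hZS : {x : ℝ | deriv (Vn n) x = 0} = ↑S := by rw [hZ, hST]
  -- membership in an interval forces equality with c k
  have huniq : ∀ k : ℕ, 1 ≤ k → k ≤ n - 1 → ∀ y : ℝ,
      y ∈ Set.Ioo ((k:ℝ) - 1/2) ((k:ℝ) + 1/2) → deriv (Vn n) y = 0 → y = c k := by
    intro k hk1 hk2 y hy hdy
    have hyS : y ∈ S := by
      have : y ∈ {x : ℝ | deriv (Vn n) x = 0} := hdy
      rwa [hZS, Finset.mem_coe] at this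
    have hk12 : (1:ℝ)/2 ≤ (k:ℝ) - 1/2 := by
      have : (1:ℝ) ≤ k := by exact_mod_cast hk1
      linarith
    obtain ⟨hyl, hyr⟩ := hy
    rw [hS] at hyS
    rcases Finset.mem_union.1 hyS with h | h
    · rcases Finset.mem_union.1 h with h | h
      · rcases Finset.mem_union.1 h with h | h
        · -- y = a j : impossible
          exfalso
          obtain ⟨j, hj, rfl⟩ := Finset.mem_image.1 h
          have h1 : (k:ℝ) < j := by linarith
          have h2 : (j:ℝ) < k + 1 := by linarith
          have : k < j := by exact_mod_cast h1
          have : j < k + 1 := by exact_mod_cast h2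
          omega
        · -- y = c j : j must equal k
          obtain ⟨j, hj, rfl⟩ := Finset.mem_image.1 h
          rw [Finset.mem_Icc] at hj
          have hcj := (hc j hj.1 hj.2).1
          obtain ⟨hcl, hcr⟩ := hcj
          rcases Nat.lt_trichotomy j k with h | h | h
          · exfalso
            have : (j:ℝ) + 1 ≤ k := by exact_mod_cast h
            linarith
          · rw [h]
          · exfalso
            have : (k:ℝ) + 1 ≤ j := by exact_mod_cast h
            linarith
      · exfalso
        obtain ⟨z, hz, rfl⟩ := Finset.mem_image.1 h
        have := hpos_half _ hz
        linarith
    · exfalso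
      rw [Finset.mem_singleton.1 h] at hyl
      linarith
  refine ⟨?_, ?_, hd0, hda, ?_⟩
  · rw [hZS]; exact S.finite_toSet
  · rw [hZS, Set.ncard_coe_finset, hScard]
  · intro k hk1 hk2
    have hck := hc k hk1 hk2
    constructor
    · exact ⟨c k, ⟨hck.1, hck.2⟩, fun y hy => huniq k hk1 hk2 y hy.1 hy.2⟩
    · refine ⟨-(c k), ⟨?_, by rw [deriv_Vn_odd, hck.2, neg_zero]⟩, ?_⟩
      · obtain ⟨h1, h2⟩ := hck.1
        exact ⟨by linarith, by linarith⟩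
      · intro y hy
        obtain ⟨⟨hy1, hy2⟩, hdy⟩ := hy
        have hmy : -y ∈ Set.Ioo ((k:ℝ) - 1/2) ((k:ℝ) + 1/2) := by
          constructor <;> linarith
        have hdmy : deriv (Vn n) (-y) = 0 := by rw [deriv_Vn_odd, hdy, neg_zero]
        have := huniq k hk1 hk2 (-y) hmy hdmy
        linarith [this]
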